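/- arXiv:2108.10636 — 3 statements merged into one kernel-verified Lean document; each statement's English description precedes it below -/
import Mathlib

section
/- For z ∈ ℝ^K, the Euclidean projection of z onto the simplex Δ^{K-1} = { μ ∈ ℝ^K : Σ_i μ_i = 1, μ_i ≥ 0 } is given componentwise by sparsemax_i(z) = max(z_i - τ(z), 0), where τ(z) is the unique real number satisfying Σ_i max(z_i - τ(z), 0) = 1. -/
/-- For `z ∈ ℝ^K`, if `τ` satisfies `Σ_i max(z_i - τ, 0) = 1`, then
`sparsemax(z) = (max(z_i - τ, 0))_i` is the Euclidean projection of `z` onto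
the probability simplex: it lies on the simplex and is the unique minimizer of
`‖μ - z‖²` over the simplex. -/
theorem stmt5 {K : ℕ} (z : Fin K → ℝ) (τ : ℝ)
    (hτ : ∑ i, max (z i - τ) 0 = 1) :
    ((∑ i, max (z i - τ) 0 = 1) ∧ ∀ i, 0 ≤ max (z i - τ) 0) ∧
    (∀ μ : Fin K → ℝ, (∑ i, μ i = 1) → (∀ i, 0 ≤ μ i) →
      μ ≠ (fun i => max (z i - τ) 0) →
      ∑ i, (max (z i - τ) 0 - z i) ^ 2 < ∑ i, (μ i - z i) ^ 2) := by
  set s : Fin K → ℝ := fun i => max (z i - τ) 0 with hs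
  refine ⟨⟨hτ, fun i => le_max_right _ _⟩, fun μ hsum hpos hne => ?_⟩
  -- cross term pointwise bound
  have hcross : ∀ i, -τ * (μ i - s i) ≤ (s i - z i) * (μ i - s i) := by
    intro i
    rcases le_or_gt 0 (z i - τ) with h | h
    · have : s i = z i - τ := max_eq_left h
      rw [this]; ring_nf; rfl
    · have hsi : s i = 0 := max_eq_right h.le
      rw [hsi]
      have : -z i * μ i ≥ -τ * μ i := by nlinarith [hpos i]
      nlinarith
  have hsumcross : 0 ≤ ∑ i, (s i - z i) * (μ i - s i) := by
    have h1 : ∑ i, -τ * (μ i - s i) ≤ ∑ i, (s i - z i) * (μ i - s i) :=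
      Finset.sum_le_sum fun i _ => hcross i
    have h2 : ∑ i, -τ * (μ i - s i) = -τ * (∑ i, μ i - ∑ i, s i) := by
      rw [← Finset.mul_sum, Finset.sum_sub_distrib]
    rw [h2, hsum, hτ] at h1
    simpa using h1
  -- some coordinate differs
  have hex : ∃ i, μ i ≠ s i := by
    by_contra h
    push_neg at h
    exact hne (funext h)
  obtain ⟨j, hj⟩ := hex
  have hdiffpos : 0 < ∑ i, (μ i - s i) ^ 2 := by
    apply Finset.sum_pos' (fun i _ => sq_nonneg _)
    exact ⟨j, Finset.mem_univ j, pow_pos (abs_pos.mpr (sub_ne_zero.mpr hj)) 2 |>.trans_eq (by rw [sq_abs])⟩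
  have hexpand : ∑ i, (μ i - z i) ^ 2 =
      ∑ i, (μ i - s i) ^ 2 + 2 * ∑ i, (s i - z i) * (μ i - s i)
        + ∑ i, (s i - z i) ^ 2 := by
    rw [Finset.mul_sum, ← Finset.sum_add_distrib, ← Finset.sum_add_distrib]
    exact Finset.sum_congr rfl fun i _ => by ring
  rw [hexpand]
  linarith
end

section
/- For any z ∈ ℝ^K, there exists a unique τ ∈ ℝ such that Σ_{i=1}^K max(z_i - τ, 0) = 1. -/
lemma stmt6_mono {K : ℕ} (z : Fin K → ℝ) {a b : ℝ} (hab : a < b)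
    (hb : 0 < ∑ i, max (z i - b) 0) :
    ∑ i, max (z i - b) 0 < ∑ i, max (z i - a) 0 := by
  obtain ⟨i, -, hi⟩ : ∃ i ∈ Finset.univ, 0 < max (z i - b) 0 := by
    by_contra h
    push_neg at h
    have : ∑ i, max (z i - b) 0 ≤ 0 :=
      Finset.sum_nonpos fun i _ => h i (Finset.mem_univ i)
    linarith
  have hib : 0 < z i - b := by
    rcases lt_or_ge 0 (z i - b) with h | h
    · exact h
    · simp [max_eq_right h] at hi
  apply Finset.sum_lt_sum
  · intro j _
    exact max_le_max (by linarith) le_rfl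
  · exact ⟨i, Finset.mem_univ i, by
      rw [max_eq_left hib.le, max_eq_left (by linarith : (0:ℝ) ≤ z i - a)]
      linarith⟩

/-- For any `z ∈ ℝ^K` (with `K ≥ 1`), there exists a unique `τ ∈ ℝ` such that
`Σ_{i=1}^K max(z_i - τ, 0) = 1`. -/
theorem stmt6 {K : ℕ} (hK : 0 < K) (z : Fin K → ℝ) :
    ∃! τ : ℝ, ∑ i, max (z i - τ) 0 = 1 := by
  set f : ℝ → ℝ := fun τ => ∑ i, max (z i - τ) 0 with hf
  have hcont : Continuous f := by
    apply continuous_finset_sum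
    intro i _
    exact (continuous_const.sub continuous_id).max continuous_const
  -- bounds
  have hne : (Finset.univ : Finset (Fin K)).Nonempty := Finset.univ_nonempty_iff.mpr
    (Fin.pos_iff_nonempty.mp hK)
  obtain ⟨a, ha⟩ : ∃ a : ℝ, 1 ≤ f a := by
    obtain ⟨i₀, -⟩ := hne
    refine ⟨z i₀ - 1, ?_⟩
    have : max (z i₀ - (z i₀ - 1)) 0 = 1 := by norm_num
    calc (1:ℝ) = max (z i₀ - (z i₀ - 1)) 0 := this.symm
      _ ≤ f (z i₀ - 1) := by
        show max (z i₀ - (z i₀ - 1)) 0 ≤ ∑ i, max (z i - (z i₀ - 1)) 0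
        exact Finset.single_le_sum (f := fun j => max (z j - (z i₀ - 1)) 0)
          (fun j _ => le_max_right _ 0) (Finset.mem_univ i₀)
  obtain ⟨b, hb⟩ : ∃ b : ℝ, f b = 0 := by
    obtain ⟨M, hM⟩ := Finset.exists_le (Finset.univ.image z)
    refine ⟨M, Finset.sum_eq_zero fun i _ => ?_⟩
    have : z i ≤ M := hM _ (Finset.mem_image_of_mem z (Finset.mem_univ i))
    rw [max_eq_right]; linarith
  have hab : a ≤ b := by
    by_contra h
    push_neg at h
    have hfa : f a = ∑ i, max (z i - a) 0 := rfl
    have hfb : f b = ∑ i, max (z i - b) 0 := rfl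
    have := stmt6_mono z h (by rw [← hfa]; linarith)
    rw [← hfa, ← hfb] at this
    linarith
  have : (1:ℝ) ∈ Set.Icc (f b) (f a) := ⟨by rw [hb]; norm_num, ha⟩
  obtain ⟨τ, hτmem, hτ⟩ := intermediate_value_Icc' hab hcont.continuousOn this
  refine ⟨τ, hτ, fun τ' hτ' => ?_⟩
  by_contra hne'
  have hτs : ∑ i, max (z i - τ) 0 = 1 := hτ
  rcases lt_or_gt_of_ne hne' with h | h
  · have := stmt6_mono z h (by rw [hτs]; norm_num)
    rw [hτs, hτ'] at this; linarith
  · have := stmt6_mono z h (by rw [hτ']; norm_num)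
    rw [hτs, hτ'] at this; linarith
end

section
/- Sorting z so that z_{(1)} ≥ z_{(2)} ≥ ... ≥ z_{(K)}, let k(z) = max { k ∈ [K] : 1 + k z_{(k)} > Σ_{j ≤ k} z_{(j)} } and τ(z) = ( Σ_{j ≤ k(z)} z_{(j)} - 1 ) / k(z). Then the vector with components max(z_i - τ(z), 0) lies on the simplex, i.e., Σ_i max(z_i - τ(z), 0) = 1 and each component is nonnegative. -/
/-- Closed form of the sparsemax threshold: sorting `z` in decreasing order via
a permutation `σ`, with `k(z)` the largest index `k` (0-based, counting `k+1`
coordinates) such that `1 + (k+1) z_{(k)} > Σ_{j ≤ k} z_{(j)}`, and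
`τ(z) = (Σ_{j ≤ k(z)} z_{(j)} - 1) / (k(z)+1)`, the vector with components
`max(z_i - τ(z), 0)` lies on the probability simplex. -/
theorem stmt7 {K : ℕ} (hK : 0 < K) (z : Fin K → ℝ)
    (σ : Equiv.Perm (Fin K)) (hsort : Antitone (fun j => z (σ j)))
    (kz : Fin K)
    (hmem : 1 + ((kz : ℕ) + 1 : ℝ) * z (σ kz) > ∑ j ∈ Finset.Iic kz, z (σ j))
    (hmax : ∀ k : Fin K,
      1 + ((k : ℕ) + 1 : ℝ) * z (σ k) > (∑ j ∈ Finset.Iic k, z (σ j)) → k ≤ kz) :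
    (∑ i, max (z i - ((∑ j ∈ Finset.Iic kz, z (σ j)) - 1) / ((kz : ℕ) + 1)) 0 = 1) ∧
    ∀ i, 0 ≤ max (z i - ((∑ j ∈ Finset.Iic kz, z (σ j)) - 1) / ((kz : ℕ) + 1)) 0 := by
  set S : ℝ := ∑ j ∈ Finset.Iic kz, z (σ j) with hS
  set τ : ℝ := (S - 1) / ((kz : ℕ) + 1) with hτ
  have hkpos : (0 : ℝ) < (kz : ℕ) + 1 := by positivity
  -- threshold below z (σ kz)
  have hτlt : τ < z (σ kz) := by
    rw [hτ, div_lt_iff₀ hkpos]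
    nlinarith [hmem]
  -- for j ≤ kz, z (σ j) > τ
  have hbig : ∀ j : Fin K, j ≤ kz → τ < z (σ j) := fun j hj =>
    lt_of_lt_of_le hτlt (hsort hj)
  -- for j > kz, z (σ j) ≤ τ
  have hsmall : ∀ j : Fin K, kz < j → z (σ j) ≤ τ := by
    intro j hj
    have hlt : (kz : ℕ) + 1 ≤ (j : ℕ) := hj
    have hk' : (kz : ℕ) + 1 < K := lt_of_le_of_lt hlt j.isLt
    set k' : Fin K := ⟨(kz : ℕ) + 1, hk'⟩ with hk'def
    have hnot : ¬ k' ≤ kz := by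
      intro h
      have : (kz : ℕ) + 1 ≤ (kz : ℕ) := h
      omega
    have hfail : ¬ (1 + ((k' : ℕ) + 1 : ℝ) * z (σ k') > ∑ j ∈ Finset.Iic k', z (σ j)) :=
      fun h => hnot (hmax k' h)
    push_neg at hfail
    have hins : Finset.Iic k' = insert k' (Finset.Iic kz) := by
      ext x
      simp only [Finset.mem_Iic, Finset.mem_insert, Fin.le_def, Fin.ext_iff, hk'def]
      omega
    have hnotmem : k' ∉ Finset.Iic kz := by
      simpa [Finset.mem_Iic] using hnot
    rw [hins, Finset.sum_insert hnotmem] at hfail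
    have hcast : ((k' : ℕ) : ℝ) = (kz : ℕ) + 1 := by
      simp [hk'def]
    rw [hcast] at hfail
    -- 1 + (kz+2) z(σ k') ≤ z(σ k') + S, so (kz+1) z(σ k') ≤ S - 1
    have hz : z (σ k') ≤ τ := by
      rw [hτ, le_div_iff₀ hkpos]
      nlinarith [hfail]
    have hle : k' ≤ j := by
      simpa [Fin.le_def, hk'def] using hlt
    exact le_trans (hsort hle) hz
  have hcard : (Finset.Iic kz).card = (kz : ℕ) + 1 := by
    simp [Fin.card_Iic]
  constructor
  · have hperm : ∑ i, max (z i - τ) 0 = ∑ j, max (z (σ j) - τ) 0 :=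
      (Equiv.sum_comp σ (fun i => max (z i - τ) 0)).symm
    rw [hperm]
    rw [← Finset.sum_add_sum_compl (Finset.Iic kz)]
    have h1 : ∑ j ∈ Finset.Iic kz, max (z (σ j) - τ) 0
        = S - ((kz : ℕ) + 1) * τ := by
      rw [show ∀ s : Finset (Fin K), (∀ j ∈ s, max (z (σ j) - τ) 0 = z (σ j) - τ) →
          ∑ j ∈ s, max (z (σ j) - τ) 0 = ∑ j ∈ s, (z (σ j) - τ) from
        fun s h => Finset.sum_congr rfl h]
      · rw [Finset.sum_sub_distrib, Finset.sum_const, hcard, ← hS]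
        push_cast
        ring
      · intro j hj
        have := hbig j (Finset.mem_Iic.mp hj)
        exact max_eq_left (by linarith)
    have h2 : ∑ j ∈ (Finset.Iic kz)ᶜ, max (z (σ j) - τ) 0 = 0 := by
      apply Finset.sum_eq_zero
      intro j hj
      have hjgt : kz < j := by
        simpa [Finset.mem_compl, Finset.mem_Iic] using hj
      have := hsmall j hjgt
      exact max_eq_right (by linarith)
    rw [h1, h2, hτ]
    field_simp
    ring
  · intro i
    exact le_max_right _ 0
end
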